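/- Let S⁺, S⁻ : ℝ → ℝ be C² functions. Define x(u,v) = (½(u+v), ½(S⁺'(u) + S⁻'(v))), g(u,v) = (½(S⁺'(u) − S⁻'(v)), −½(u−v)), and f(u,v) = ½S⁺(u) − ½S⁻(v) − ¼(u−v)(S⁺'(u) + S⁻'(v)). Then for all (u,v) ∈ ℝ²: (i) ∂f/∂u = ⟨g, ∂x/∂u⟩ and ∂f/∂v = ⟨g, ∂x/∂v⟩ (Euclidean inner product on ℝ²); and (ii) the Jacobian determinants satisfy det D g(u,v) = − det D x(u,v). (Consequently, wherever x is a local diffeomorphism, the function F = f ∘ x⁻¹ has gradient ∇F = g ∘ x⁻¹ and Hessian determinant det D²F = −1, i.e. it is a solution of the non-convex Monge–Ampère equation.) -/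

import Mathlib

lemma hasFDerivAt_div_const {f : ℝ × ℝ → ℝ} {f' : ℝ × ℝ →L[ℝ] ℝ} {p : ℝ × ℝ}
    (h : HasFDerivAt f f' p) (c : ℝ) :
    HasFDerivAt (fun x => f x / c) (c⁻¹ • f') p := by
  exact (h.const_smul c⁻¹).congr_of_eventuallyEq
    (Filter.Eventually.of_forall fun x => by simp [div_eq_inv_mul, smul_eq_mul])

/-- Jacobian determinant of a map `ℝ² → ℝ²`. -/
noncomputable def jdet (F : ℝ × ℝ → ℝ × ℝ) (p : ℝ × ℝ) : ℝ :=
  (fderiv ℝ F p (1, 0)).1 * (fderiv ℝ F p (0, 1)).2 -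
    (fderiv ℝ F p (1, 0)).2 * (fderiv ℝ F p (0, 1)).1

theorem stmt4 (Sp Sm : ℝ → ℝ) (hSp : ContDiff ℝ 2 Sp) (hSm : ContDiff ℝ 2 Sm)
    (x g : ℝ × ℝ → ℝ × ℝ) (f : ℝ × ℝ → ℝ)
    (hx : ∀ u v : ℝ, x (u, v) = ((u + v) / 2, (deriv Sp u + deriv Sm v) / 2))
    (hg : ∀ u v : ℝ, g (u, v) = ((deriv Sp u - deriv Sm v) / 2, -((u - v) / 2)))
    (hf : ∀ u v : ℝ, f (u, v) =
      Sp u / 2 - Sm v / 2 - (u - v) * (deriv Sp u + deriv Sm v) / 4) :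
    ∀ u v : ℝ,
      fderiv ℝ f (u, v) (1, 0) =
        (g (u, v)).1 * (fderiv ℝ x (u, v) (1, 0)).1 +
          (g (u, v)).2 * (fderiv ℝ x (u, v) (1, 0)).2 ∧
      fderiv ℝ f (u, v) (0, 1) =
        (g (u, v)).1 * (fderiv ℝ x (u, v) (0, 1)).1 +
          (g (u, v)).2 * (fderiv ℝ x (u, v) (0, 1)).2 ∧
      jdet g (u, v) = -jdet x (u, v) := by
  have hx' : x = fun p : ℝ × ℝ => ((p.1 + p.2) / 2, (deriv Sp p.1 + deriv Sm p.2) / 2) := by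
    funext p; exact hx p.1 p.2
  have hg' : g = fun p : ℝ × ℝ => ((deriv Sp p.1 - deriv Sm p.2) / 2, -((p.1 - p.2) / 2)) := by
    funext p; exact hg p.1 p.2
  have hf' : f = fun p : ℝ × ℝ =>
      Sp p.1 / 2 - Sm p.2 / 2 - (p.1 - p.2) * (deriv Sp p.1 + deriv Sm p.2) / 4 := by
    funext p; exact hf p.1 p.2
  have hdp : Differentiable ℝ (deriv Sp) := by
    exact (contDiff_succ_iff_deriv.mp (by norm_num at hSp ⊢; exact hSp :
      ContDiff ℝ (1 + 1) Sp)).2.2.differentiable one_ne_zero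
  have hdm : Differentiable ℝ (deriv Sm) := by
    exact (contDiff_succ_iff_deriv.mp (by norm_num at hSm ⊢; exact hSm :
      ContDiff ℝ (1 + 1) Sm)).2.2.differentiable one_ne_zero
  intro u v
  have hφ : HasDerivAt (deriv Sp) (deriv (deriv Sp) u) u := (hdp u).hasDerivAt
  have hψ : HasDerivAt (deriv Sm) (deriv (deriv Sm) v) v := (hdm v).hasDerivAt
  have hSpu : HasDerivAt Sp (deriv Sp u) u :=
    ((hSp.differentiable (by norm_num)) u).hasDerivAt
  have hSmv : HasDerivAt Sm (deriv Sm v) v :=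
    ((hSm.differentiable (by norm_num)) v).hasDerivAt
  have hφ1 : HasFDerivAt (fun p : ℝ × ℝ => deriv Sp p.1)
      ((deriv (deriv Sp) u) • ContinuousLinearMap.fst ℝ ℝ ℝ) (u, v) :=
    hφ.comp_hasFDerivAt (f := Prod.fst) (u, v) hasFDerivAt_fst
  have hψ2 : HasFDerivAt (fun p : ℝ × ℝ => deriv Sm p.2)
      ((deriv (deriv Sm) v) • ContinuousLinearMap.snd ℝ ℝ ℝ) (u, v) :=
    hψ.comp_hasFDerivAt (f := Prod.snd) (u, v) hasFDerivAt_snd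
  have hSp1 : HasFDerivAt (fun p : ℝ × ℝ => Sp p.1)
      ((deriv Sp u) • ContinuousLinearMap.fst ℝ ℝ ℝ) (u, v) :=
    hSpu.comp_hasFDerivAt (f := Prod.fst) (u, v) hasFDerivAt_fst
  have hSm2 : HasFDerivAt (fun p : ℝ × ℝ => Sm p.2)
      ((deriv Sm v) • ContinuousLinearMap.snd ℝ ℝ ℝ) (u, v) :=
    hSmv.comp_hasFDerivAt (f := Prod.snd) (u, v) hasFDerivAt_snd
  have hxd : HasFDerivAt (fun p : ℝ × ℝ => ((p.1 + p.2) / 2, (deriv Sp p.1 + deriv Sm p.2) / 2)) _ (u, v) :=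
    HasFDerivAt.prodMk (hasFDerivAt_div_const ((hasFDerivAt_fst (𝕜 := ℝ) (p := (u, v)) (E := ℝ)
      (F := ℝ)).add hasFDerivAt_snd) 2) (hasFDerivAt_div_const (hφ1.add hψ2) 2)
  have hgd : HasFDerivAt (fun p : ℝ × ℝ => ((deriv Sp p.1 - deriv Sm p.2) / 2, -((p.1 - p.2) / 2))) _ (u, v) :=
    HasFDerivAt.prodMk (hasFDerivAt_div_const (hφ1.sub hψ2) 2)
      (HasFDerivAt.neg (hasFDerivAt_div_const ((hasFDerivAt_fst (𝕜 := ℝ) (p := (u, v)) (E := ℝ)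
        (F := ℝ)).sub hasFDerivAt_snd) 2))
  have hfd : HasFDerivAt (fun p : ℝ × ℝ =>
      Sp p.1 / 2 - Sm p.2 / 2 - (p.1 - p.2) * (deriv Sp p.1 + deriv Sm p.2) / 4) _ (u, v) :=
    HasFDerivAt.sub (HasFDerivAt.sub (hasFDerivAt_div_const hSp1 2) (hasFDerivAt_div_const hSm2 2))
      (hasFDerivAt_div_const (((hasFDerivAt_fst (𝕜 := ℝ) (p := (u, v)) (E := ℝ)
        (F := ℝ)).sub hasFDerivAt_snd).mul (hφ1.add hψ2)) 4)
  refine ⟨?_, ?_, ?_⟩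
  · rw [hf', hx', hfd.fderiv, hxd.fderiv, hg u v]
    simp
    try ring
  · rw [hf', hx', hfd.fderiv, hxd.fderiv, hg u v]
    simp
    try ring
  · rw [jdet, jdet, hx', hg', hgd.fderiv, hxd.fderiv]
    simp
    try ring
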